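/- Under the hypotheses of the tridiagonal setting (B of size D+1 ≥ 3 with α₀ = 0, γ₁ = 1, α_i + β_i + γ_i = κ, positive super/subdiagonal), equality (θ₁ + 1)(θ_D + 1) = −β₁ holds if and only if D = 2. -/

import Mathlib

open Polynomial Matrix
open Fin.NatCast

noncomputable def dseq {D : ℕ} (B : Matrix (Fin (D+1)) (Fin (D+1)) ℝ) : ℕ → ℝ
  | 0 => 1
  | (k+1) => dseq B k * Real.sqrt (B (↑(k+1)) (↑k) / B (↑k) (↑(k+1)))

theorem stmt_6 (D : ℕ) (hD : 2 ≤ D) (B : Matrix (Fin (D+1)) (Fin (D+1)) ℝ) (κ : ℝ)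
    (hnonneg : ∀ i j, 0 ≤ B i j)
    (htri : ∀ i j : Fin (D+1), ((i : ℕ) + 1 < (j : ℕ) ∨ (j : ℕ) + 1 < (i : ℕ)) → B i j = 0)
    (hsuper : ∀ i : Fin D, 0 < B i.castSucc i.succ)
    (hsub : ∀ i : Fin D, 0 < B i.succ i.castSucc)
    (hα0 : B 0 0 = 0)
    (hγ1 : B 1 0 = 1)
    (hrow : ∀ i, ∑ j, B i j = κ)
    (θ : Fin (D+1) → ℝ) (hθ : StrictAnti θ) (hθ0 : θ 0 = κ)
    (hchar : B.charpoly = ∏ i, (X - C (θ i))) :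
    (θ 1 + 1) * (θ (Fin.last D) + 1) = - B 1 2 ↔ D = 2 := by
  -- basic index facts
  have v0 : ((0 : Fin (D+1)) : ℕ) = 0 := rfl
  have v1 : ((1 : Fin (D+1)) : ℕ) = 1 := by
    rw [show ((1 : Fin (D+1)) : ℕ) = 1 % (D+1) from rfl, Nat.mod_eq_of_lt (by omega)]
  have v2 : ((2 : Fin (D+1)) : ℕ) = 2 := by
    rw [show ((2 : Fin (D+1)) : ℕ) = 2 % (D+1) from rfl, Nat.mod_eq_of_lt (by omega)]
  have ne01 : (0 : Fin (D+1)) ≠ 1 := by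
    intro h; apply_fun (Fin.val) at h; omega
  have ne12 : (1 : Fin (D+1)) ≠ 2 := by
    intro h; apply_fun (Fin.val) at h; omega
  have ne02 : (0 : Fin (D+1)) ≠ 2 := by
    intro h; apply_fun (Fin.val) at h; omega
  -- positivity of sub/superdiagonal entries, val-based
  have hsub' : ∀ i j : Fin (D+1), (i : ℕ) = (j : ℕ) + 1 → 0 < B i j := by
    intro i j h
    have hj : (j : ℕ) < D := by have := i.isLt; omega
    have e1 : (⟨(j : ℕ), hj⟩ : Fin D).succ = i := by
      apply Fin.ext; simp [Fin.val_succ, h]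
    have e2 : (⟨(j : ℕ), hj⟩ : Fin D).castSucc = j := by
      apply Fin.ext; simp
    have := hsub ⟨(j : ℕ), hj⟩
    rwa [e1, e2] at this
  have hsuper' : ∀ i j : Fin (D+1), (j : ℕ) = (i : ℕ) + 1 → 0 < B i j := by
    intro i j h
    have hi : (i : ℕ) < D := by have := j.isLt; omega
    have e1 : (⟨(i : ℕ), hi⟩ : Fin D).succ = j := by
      apply Fin.ext; simp [Fin.val_succ, h]
    have e2 : (⟨(i : ℕ), hi⟩ : Fin D).castSucc = i := by
      apply Fin.ext; simp
    have := hsuper ⟨(i : ℕ), hi⟩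
    rwa [e1, e2] at this
  -- row sum facts
  have hB01 : B 0 1 = κ := by
    have h := hrow 0
    rw [Finset.sum_eq_single (1 : Fin (D+1))] at h
    · exact h
    · intro b _ hb
      rcases Nat.lt_or_ge (b : ℕ) 2 with hlt | hge
      · interval_cases hbv : (b : ℕ)
        · have : b = 0 := Fin.ext (by omega)
          rw [this]; exact hα0
        · exact absurd (Fin.ext (by omega) : b = 1) hb
      · exact htri _ _ (Or.inl (by omega))
    · intro h; exact absurd (Finset.mem_univ _) h
  have hκ1 : 1 ≤ κ := by
    have h := hrow 1
    have : B 1 0 ≤ ∑ j, B 1 j :=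
      Finset.single_le_sum (fun j _ => hnonneg 1 j) (Finset.mem_univ 0)
    rw [h, hγ1] at this; exact this
  have hκpos : 0 < κ := lt_of_lt_of_le one_pos hκ1
  have hB11 : B 1 1 = κ - 1 - B 1 2 := by
    have h := hrow 1
    have hsub3 : ({0, 1, 2} : Finset (Fin (D+1))) ⊆ Finset.univ := Finset.subset_univ _
    rw [← Finset.sum_subset hsub3 (by
      intro j _ hj
      simp only [Finset.mem_insert, Finset.mem_singleton] at hj
      push_neg at hj
      obtain ⟨h0, h1, h2⟩ := hj
      have : 2 < (j : ℕ) := by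
        rcases Nat.lt_or_ge (j : ℕ) 3 with hlt | hge
        · interval_cases hbv : (j : ℕ)
          · exact absurd (Fin.ext (by omega) : j = 0) h0
          · exact absurd (Fin.ext (by omega) : j = 1) h1
          · exact absurd (Fin.ext (by omega) : j = 2) h2
        · omega
      exact htri _ _ (Or.inl (by omega)))] at h
    rw [Finset.sum_insert (by simp [ne01, ne02]),
        Finset.sum_insert (by simp [ne12]), Finset.sum_singleton, hγ1] at h
    linarith
  -- entries of the factors
  have fac : ∀ (c : ℝ) (i j : Fin (D+1)),
      (B - c • (1 : Matrix (Fin (D+1)) (Fin (D+1)) ℝ)) i j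
        = B i j - c * (if i = j then 1 else 0) := by
    intro c i j
    simp [Matrix.sub_apply, Matrix.one_apply]
  -- the key (0,0) entry computation
  have ge2 : ∀ x : Fin (D+1), x ≠ 0 → x ≠ 1 → 2 ≤ (x : ℕ) := by
    intro x h0 h1
    by_contra h
    push_neg at h
    interval_cases hx : (x : ℕ)
    · exact h0 (Fin.ext (by omega))
    · exact h1 (Fin.ext (by omega))
  have pair : ∀ f : Fin (D+1) → ℝ, (∀ k : Fin (D+1), 2 ≤ (k : ℕ) → f k = 0) →
      ∑ k, f k = f 0 + f 1 := by
    intro f hf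
    rw [← Finset.sum_subset (Finset.subset_univ ({0, 1} : Finset (Fin (D+1))))
      (fun x _ hx => by
        simp only [Finset.mem_insert, Finset.mem_singleton] at hx
        push_neg at hx
        exact hf x (ge2 x hx.1 hx.2)),
      Finset.sum_pair ne01]
  have hBtop : ∀ k : Fin (D+1), 2 ≤ (k : ℕ) → B 0 k = 0 := by
    intro k hk; exact htri _ _ (Or.inl (by rw [v0]; omega))
  have hBcol0 : ∀ k : Fin (D+1), 2 ≤ (k : ℕ) → B k 0 = 0 := by
    intro k hk; exact htri _ _ (Or.inr (by rw [v0]; omega))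
  have hBcol1 : ∀ k : Fin (D+1), 3 ≤ (k : ℕ) → B k 1 = 0 := by
    intro k hk; exact htri _ _ (Or.inr (by rw [v1]; omega))
  have hX0k : ∀ (c : ℝ) (k : Fin (D+1)), 2 ≤ (k : ℕ) →
      (B - c • (1 : Matrix (Fin (D+1)) (Fin (D+1)) ℝ)) 0 k = 0 := by
    intro c k hk
    rw [fac, hBtop k hk, if_neg (by intro h; apply_fun Fin.val at h; rw [v0] at h; omega)]
    ring
  have hZk0 : ∀ (c : ℝ) (k : Fin (D+1)), 2 ≤ (k : ℕ) →
      (B - c • (1 : Matrix (Fin (D+1)) (Fin (D+1)) ℝ)) k 0 = 0 := by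
    intro c k hk
    rw [fac, hBcol0 k hk, if_neg (by intro h; apply_fun Fin.val at h; rw [v0] at h; omega)]
    ring
  have key00 : ∀ a b : ℝ,
      ((B - κ • 1) * (B - a • 1) * (B - b • 1)) 0 0
        = -κ * ((1 + a) * (1 + b) + B 1 2) := by
    intro a b
    set X := B - κ • (1 : Matrix (Fin (D+1)) (Fin (D+1)) ℝ) with hXdef
    set Y := B - a • (1 : Matrix (Fin (D+1)) (Fin (D+1)) ℝ) with hYdef
    set Z := B - b • (1 : Matrix (Fin (D+1)) (Fin (D+1)) ℝ) with hZdef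
    have hX00 : X 0 0 = -κ := by rw [hXdef, fac, hα0]; simp
    have hX01 : X 0 1 = κ := by rw [hXdef, fac, hB01, if_neg ne01]; ring
    have hY00 : Y 0 0 = -a := by rw [hYdef, fac, hα0]; simp
    have hY01 : Y 0 1 = κ := by rw [hYdef, fac, hB01, if_neg ne01]; ring
    have hY10 : Y 1 0 = 1 := by rw [hYdef, fac, hγ1, if_neg (Ne.symm ne01)]; ring
    have hY11 : Y 1 1 = B 1 1 - a := by rw [hYdef, fac, if_pos rfl]; ring
    have hZ00 : Z 0 0 = -b := by rw [hZdef, fac, hα0]; simp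
    have hZ10 : Z 1 0 = 1 := by rw [hZdef, fac, hγ1, if_neg (Ne.symm ne01)]; ring
    have hXY00 : (X * Y) 0 0 = κ * a + κ := by
      rw [Matrix.mul_apply, pair _ (fun k hk => by rw [hXdef, hX0k κ k hk]; ring),
        hX00, hX01, hY00, hY10]
      ring
    have hXY01 : (X * Y) 0 1 = -κ * κ + κ * (B 1 1 - a) := by
      rw [Matrix.mul_apply, pair _ (fun k hk => by rw [hXdef, hX0k κ k hk]; ring),
        hX00, hX01, hY01, hY11]
    rw [Matrix.mul_apply, pair _ (fun k hk => by rw [hZdef, hZk0 b k hk]; ring),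
      hXY00, hXY01, hZ00, hZ10, hB11]
    ring
  -- the key (3,0) entry computation (requires D ≥ 3)
  have key30 : ∀ (i3 : Fin (D+1)), (i3 : ℕ) = 3 → ∀ (a b : ℝ),
      ((B - κ • 1) * (B - a • 1) * (B - b • 1)) i3 0
        = B i3 2 * B 2 1 := by
    intro i3 hv3 a b
    set X := B - κ • (1 : Matrix (Fin (D+1)) (Fin (D+1)) ℝ) with hXdef
    set Y := B - a • (1 : Matrix (Fin (D+1)) (Fin (D+1)) ℝ) with hYdef
    set Z := B - b • (1 : Matrix (Fin (D+1)) (Fin (D+1)) ℝ) with hZdef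
    have hX3k : ∀ k : Fin (D+1), (k : ℕ) ≤ 1 → X i3 k = 0 := by
      intro k hk
      rw [hXdef, fac, htri _ _ (Or.inr (by omega)),
        if_neg (by intro h; apply_fun Fin.val at h; omega)]
      ring
    have hXY30 : (X * Y) i3 0 = 0 := by
      rw [Matrix.mul_apply]
      apply Finset.sum_eq_zero
      intro k _
      rcases le_or_gt (k : ℕ) 1 with hk | hk
      · rw [hX3k k hk]; ring
      · rw [hYdef, fac, hBcol0 k hk,
          if_neg (by intro h; apply_fun Fin.val at h; rw [v0] at h; omega)]
        ring
    have hXY31 : (X * Y) i3 1 = B i3 2 * B 2 1 := by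
      rw [Matrix.mul_apply]
      rw [Finset.sum_eq_single (2 : Fin (D+1))]
      · rw [hXdef, fac, if_neg (by intro h; apply_fun Fin.val at h; rw [v2] at h; omega),
          hYdef, fac, if_neg (by intro h; apply_fun Fin.val at h; rw [v2, v1] at h; omega)]
        ring
      · intro k _ hk
        rcases le_or_gt (k : ℕ) 1 with h1 | h1
        · rw [hX3k k h1]; ring
        · have h3 : 3 ≤ (k : ℕ) := by
            rcases Nat.lt_or_ge (k : ℕ) 3 with h | h
            · exact absurd (Fin.ext (by rw [v2]; omega) : k = 2) hk
            · exact h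
          rw [hYdef, fac, hBcol1 k h3,
            if_neg (by intro h; apply_fun Fin.val at h; rw [v1] at h; omega)]
          ring
      · intro h; exact absurd (Finset.mem_univ _) h
    rw [Matrix.mul_apply, pair _ (fun k hk => by rw [hZdef, hZk0 b k hk]; ring),
      hXY30, hXY31]
    have hZ10 : Z 1 0 = 1 := by rw [hZdef, fac, hγ1, if_neg (Ne.symm ne01)]; ring
    have hZ00 : Z 0 0 = -b := by rw [hZdef, fac, hα0]; simp
    rw [hZ00, hZ10]
    ring
  constructor
  · -- forward: equality implies D = 2
    intro heq
    by_contra hne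
    have hD3 : 3 ≤ D := by omega
    have i3lt : 3 < D + 1 := by omega
    set i3 : Fin (D+1) := ⟨3, i3lt⟩ with hi3def
    have hv3 : (i3 : ℕ) = 3 := rfl
    -- the weights
    set d : ℕ → ℝ := dseq B with hd
    have hd0 : d 0 = 1 := rfl
    have dpos : ∀ k, k ≤ D → 0 < d k := by
      intro k
      induction k with
      | zero => intro _; rw [hd0]; norm_num
      | succ n ih =>
        intro hle
        have hn : n ≤ D := by omega
        have hvn : (((n : ℕ) : Fin (D+1)) : ℕ) = n := by
          rw [Fin.val_natCast, Nat.mod_eq_of_lt (by omega)]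
        have hvn1 : (((n+1 : ℕ) : Fin (D+1)) : ℕ) = n+1 := by
          rw [Fin.val_natCast, Nat.mod_eq_of_lt (by omega)]
        have hγ : 0 < B (↑(n+1) : Fin (D+1)) (↑n) := hsub' _ _ (by rw [hvn1, hvn])
        have hβ : 0 < B (↑n : Fin (D+1)) (↑(n+1)) := hsuper' _ _ (by rw [hvn1, hvn])
        have hs : 0 < Real.sqrt (B (↑(n+1) : Fin (D+1)) (↑n) / B (↑n) (↑(n+1))) :=
          Real.sqrt_pos.mpr (div_pos hγ hβ)
        have : d (n+1) = d n * Real.sqrt (B (↑(n+1) : Fin (D+1)) (↑n) / B (↑n) (↑(n+1))) := rfl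
        rw [this]
        exact mul_pos (ih hn) hs
    have dkey : ∀ n : ℕ, n + 1 ≤ D →
        d (n+1) ^ 2 * B (↑n : Fin (D+1)) (↑(n+1)) = d n ^ 2 * B (↑(n+1) : Fin (D+1)) (↑n) := by
      intro n hle
      have hvn : (((n : ℕ) : Fin (D+1)) : ℕ) = n := by
        rw [Fin.val_natCast, Nat.mod_eq_of_lt (by omega)]
      have hvn1 : (((n+1 : ℕ) : Fin (D+1)) : ℕ) = n+1 := by
        rw [Fin.val_natCast, Nat.mod_eq_of_lt (by omega)]
      have hγ : 0 < B (↑(n+1) : Fin (D+1)) (↑n) := hsub' _ _ (by rw [hvn1, hvn])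
      have hβ : 0 < B (↑n : Fin (D+1)) (↑(n+1)) := hsuper' _ _ (by rw [hvn1, hvn])
      have hdn : d (n+1) = d n * Real.sqrt (B (↑(n+1) : Fin (D+1)) (↑n) / B (↑n) (↑(n+1))) := rfl
      rw [hdn, mul_pow, Real.sq_sqrt (le_of_lt (div_pos hγ hβ)), mul_assoc,
        div_mul_cancel₀ _ (ne_of_gt hβ)]
    -- diagonal conjugation matrices
    set Δ : Matrix (Fin (D+1)) (Fin (D+1)) ℝ := Matrix.diagonal (fun i => d (i : ℕ)) with hΔdef
    set Δi : Matrix (Fin (D+1)) (Fin (D+1)) ℝ := Matrix.diagonal (fun i => (d (i : ℕ))⁻¹) with hΔidef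
    have hdne : ∀ i : Fin (D+1), d (i : ℕ) ≠ 0 := fun i =>
      ne_of_gt (dpos (i : ℕ) (by have := i.isLt; omega))
    have hΔiΔ : Δi * Δ = 1 := by
      rw [hΔidef, hΔdef, Matrix.diagonal_mul_diagonal, ← Matrix.diagonal_one]
      have e : (fun i : Fin (D+1) => (d (i : ℕ))⁻¹ * d (i : ℕ)) = fun _ => (1:ℝ) :=
        funext fun i => inv_mul_cancel₀ (hdne i)
      rw [e]
    have hΔΔi : Δ * Δi = 1 := by
      rw [hΔidef, hΔdef, Matrix.diagonal_mul_diagonal, ← Matrix.diagonal_one]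
      have e : (fun i : Fin (D+1) => d (i : ℕ) * (d (i : ℕ))⁻¹) = fun _ => (1:ℝ) :=
        funext fun i => mul_inv_cancel₀ (hdne i)
      rw [e]
    set A := Δi * B * Δ with hAdef
    have hAapp : ∀ i j, A i j = (d (i : ℕ))⁻¹ * B i j * d (j : ℕ) := by
      intro i j
      rw [hAdef, hΔdef, Matrix.mul_diagonal, hΔidef, Matrix.diagonal_mul]
    -- A is symmetric
    have hadj : ∀ i j : Fin (D+1), (i : ℕ) = (j : ℕ) + 1 →
        (d (j : ℕ))⁻¹ * B j i * d (i : ℕ) = (d (i : ℕ))⁻¹ * B i j * d (j : ℕ) := by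
      intro i j hij
      have hle : (j : ℕ) + 1 ≤ D := by have := i.isLt; omega
      have hcj : (((j : ℕ) : ℕ) : Fin (D+1)) = j := Fin.cast_val_eq_self j
      have hci : ((((j : ℕ) + 1 : ℕ)) : Fin (D+1)) = i := by
        apply Fin.ext; rw [Fin.val_natCast, Nat.mod_eq_of_lt (by omega)]; omega
      have hk := dkey (j : ℕ) hle
      rw [hcj, hci, ← hij] at hk
      have hdi := hdne i
      have hdj := hdne j
      field_simp
      linear_combination hk
    have hAh : A.IsHermitian := by
      apply Matrix.ext
      intro i j
      rw [Matrix.conjTranspose_apply, star_trivial, hAapp, hAapp]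
      rcases lt_trichotomy ((j : ℕ) + 1) (i : ℕ) with hlt | heq' | hlt
      · rw [htri j i (Or.inl hlt), htri i j (Or.inr hlt)]; ring
      · exact hadj i j heq'.symm
      · rcases lt_trichotomy ((i : ℕ) + 1) (j : ℕ) with hlt2 | heq2 | hlt2
        · rw [htri j i (Or.inr hlt2), htri i j (Or.inl hlt2)]; ring
        · exact (hadj j i heq2.symm).symm
        · have : i = j := Fin.ext (by omega)
          rw [this]
    -- every eigenvalue of A is one of the θ i
    have hroot : ∀ t : ℝ, (∃ v : Fin (D+1) → ℝ, v ≠ 0 ∧ A *ᵥ v = t • v) → ∃ i, t = θ i := by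
      intro t ht
      obtain ⟨v, hv0, hv⟩ := ht
      have hB : Δ * A * Δi = B := by
        rw [hAdef]
        have e : Δ * (Δi * B * Δ) * Δi = (Δ * Δi) * B * (Δ * Δi) := by
          simp only [Matrix.mul_assoc]
        rw [e, hΔΔi, one_mul, mul_one]
      set w := Δ *ᵥ v with hw
      have hw0 : w ≠ 0 := by
        obtain ⟨i, hi⟩ := Function.ne_iff.mp hv0
        intro h
        have h2 := congrFun h i
        rw [hw, hΔdef, Matrix.mulVec_diagonal] at h2
        exact hi (by
          have := mul_eq_zero.mp h2
          rcases this with h3 | h3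
          · exact absurd h3 (hdne i)
          · exact h3)
      have hBΔ : B * Δ = Δ * A := by
        rw [hAdef]
        have e : Δ * (Δi * B * Δ) = (Δ * Δi) * (B * Δ) := by
          simp only [Matrix.mul_assoc]
        rw [e, hΔΔi, one_mul]
      have hBw : B *ᵥ w = t • w := by
        calc B *ᵥ w = (B * Δ) *ᵥ v := by rw [hw, Matrix.mulVec_mulVec]
          _ = (Δ * A) *ᵥ v := by rw [hBΔ]
          _ = Δ *ᵥ (A *ᵥ v) := by rw [Matrix.mulVec_mulVec]
          _ = Δ *ᵥ (t • v) := by rw [hv]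
          _ = t • w := by rw [hw, Matrix.mulVec_smul]
      have hker : (t • (1 : Matrix (Fin (D+1)) (Fin (D+1)) ℝ) - B) *ᵥ w = 0 := by
        rw [Matrix.sub_mulVec, Matrix.smul_mulVec, Matrix.one_mulVec, hBw, sub_self]
      have hdet : (t • (1 : Matrix (Fin (D+1)) (Fin (D+1)) ℝ) - B).det = 0 :=
        Matrix.exists_mulVec_eq_zero_iff.mp ⟨w, hw0, hker⟩
      have hev : (B.charpoly).eval t = 0 := by
        have h1 : (B.charpoly).eval t
            = (t • (1 : Matrix (Fin (D+1)) (Fin (D+1)) ℝ) - B).det := by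
          rw [show B.charpoly = (Matrix.charmatrix B).det from rfl,
            ← Polynomial.coe_evalRingHom, RingHom.map_det]
          congr 1
          apply Matrix.ext; intro i j
          rw [RingHom.mapMatrix_apply, Matrix.map_apply]
          by_cases hij : i = j
          · subst hij
            simp [Matrix.charmatrix_apply_eq, Matrix.sub_apply, Matrix.one_apply]
          · simp [Matrix.charmatrix_apply_ne _ _ _ hij, Matrix.sub_apply,
              Matrix.one_apply_ne hij]
        rw [h1, hdet]
      rw [hchar, Polynomial.eval_prod] at hev
      obtain ⟨i, _, hi⟩ := Finset.prod_eq_zero_iff.mp hev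
      simp only [Polynomial.eval_sub, Polynomial.eval_X, Polynomial.eval_C] at hi
      exact ⟨i, by linarith [sub_eq_zero.mp hi]⟩
    -- spectral theorem for A
    set U : Matrix (Fin (D+1)) (Fin (D+1)) ℝ := (hAh.eigenvectorUnitary : Matrix (Fin (D+1)) (Fin (D+1)) ℝ) with hUdef
    have hU1 : U * star U = 1 := Matrix.mem_unitaryGroup_iff.mp hAh.eigenvectorUnitary.2
    have hU2 : star U * U = 1 := Matrix.mem_unitaryGroup_iff'.mp hAh.eigenvectorUnitary.2
    set ev : Fin (D+1) → ℝ := hAh.eigenvalues with hevdef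
    have hspec : A = U * Matrix.diagonal ev * star U := by
      have h := hAh.spectral_theorem
      rwa [RCLike.ofReal_real_eq_id, Function.id_comp] at h
    have hevθ : ∀ j, ∃ i, ev j = θ i := by
      intro j
      apply hroot
      refine ⟨(WithLp.equiv 2 _) (hAh.eigenvectorBasis j), ?_,
        hAh.mulVec_eigenvectorBasis j⟩
      have hb := hAh.eigenvectorBasis.orthonormal.ne_zero j
      intro h
      apply hb
      apply (WithLp.equiv 2 _).injective
      simpa using h
    -- nonnegativity of the spectral coefficients
    have hq : ∀ j, 0 ≤ (ev j - κ) * (ev j - θ 1) * (ev j - θ (Fin.last D)) := by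
      intro j
      obtain ⟨i, hi⟩ := hevθ j
      rw [hi, ← hθ0]
      by_cases h0 : i = 0
      · subst h0; simp
      · have h1 : (1 : Fin (D+1)) ≤ i := by
          rw [Fin.le_def, v1]
          have : (i : ℕ) ≠ 0 := fun h => h0 (Fin.ext h)
          omega
        have e0 : θ i - θ 0 ≤ 0 := sub_nonpos.mpr (hθ.antitone (Fin.zero_le i))
        have e1 : θ i - θ 1 ≤ 0 := sub_nonpos.mpr (hθ.antitone h1)
        have e2 : 0 ≤ θ i - θ (Fin.last D) := sub_nonneg.mpr (hθ.antitone (Fin.le_last i))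
        nlinarith [mul_nonneg (mul_nonneg (neg_nonneg.mpr e0) (neg_nonneg.mpr e1)) e2]
    -- conjugation identities
    have conj1 : ∀ c : ℝ, A - c • 1 = U * Matrix.diagonal (fun j => ev j - c) * star U := by
      intro c
      have h1 : (c • (1 : Matrix (Fin (D+1)) (Fin (D+1)) ℝ)) = U * (c • 1) * star U := by
        rw [Matrix.mul_smul, Matrix.smul_mul, Matrix.mul_one, hU1]
      have h2 : Matrix.diagonal (fun j => ev j - c)
          = Matrix.diagonal ev - c • (1 : Matrix (Fin (D+1)) (Fin (D+1)) ℝ) := by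
        apply Matrix.ext; intro i j
        by_cases hij : i = j
        · subst hij
          simp [Matrix.sub_apply, Matrix.diagonal_apply_eq, Matrix.one_apply]
        · simp [Matrix.sub_apply, Matrix.diagonal_apply_ne _ hij, Matrix.one_apply_ne hij]
      rw [h2, Matrix.mul_sub, Matrix.sub_mul, ← h1, ← hspec]
    have conj2 : ∀ f g : Fin (D+1) → ℝ,
        (U * Matrix.diagonal f * star U) * (U * Matrix.diagonal g * star U)
          = U * Matrix.diagonal (fun j => f j * g j) * star U := by
      intro f g
      have e : star U * (U * (Matrix.diagonal g * star U)) = Matrix.diagonal g * star U := by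
        rw [← Matrix.mul_assoc, hU2, one_mul]
      calc (U * Matrix.diagonal f * star U) * (U * Matrix.diagonal g * star U)
          = U * (Matrix.diagonal f * (star U * (U * (Matrix.diagonal g * star U)))) := by
            simp only [Matrix.mul_assoc]
        _ = U * (Matrix.diagonal f * (Matrix.diagonal g * star U)) := by rw [e]
        _ = U * (Matrix.diagonal f * Matrix.diagonal g) * star U := by
            simp only [Matrix.mul_assoc]
        _ = U * Matrix.diagonal (fun j => f j * g j) * star U := by
            rw [Matrix.diagonal_mul_diagonal]
    -- the positive semidefinite matrix N
    set S := (B - κ • 1) * (B - θ 1 • 1) * (B - θ (Fin.last D) • 1) with hS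
    set N := (A - κ • 1) * (A - θ 1 • 1) * (A - θ (Fin.last D) • 1) with hN
    have hNform : N = U * Matrix.diagonal
        (fun j => (ev j - κ) * (ev j - θ 1) * (ev j - θ (Fin.last D))) * star U := by
      rw [hN, conj1 κ, conj1 (θ 1), conj1 (θ (Fin.last D)), conj2, conj2]
    have hNpsd : N.PosSemidef := by
      rw [hNform]
      have hdiag : (Matrix.diagonal
          (fun j => (ev j - κ) * (ev j - θ 1) * (ev j - θ (Fin.last D)))).PosSemidef :=
        Matrix.posSemidef_diagonal_iff.mpr hq
      have h := hdiag.mul_mul_conjTranspose_same U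
      rwa [Matrix.star_eq_conjTranspose]
    -- N in terms of S
    have hfacconj : ∀ c : ℝ, A - c • 1 = Δi * (B - c • 1) * Δ := by
      intro c
      rw [hAdef, Matrix.mul_sub, Matrix.sub_mul]
      congr 1
      rw [Matrix.mul_smul, Matrix.smul_mul, Matrix.mul_one, hΔiΔ]
    have hmid : ∀ M : Matrix (Fin (D+1)) (Fin (D+1)) ℝ, Δ * (Δi * M) = M := by
      intro M
      rw [← Matrix.mul_assoc, hΔΔi, one_mul]
    have hNS : N = Δi * S * Δ := by
      rw [hN, hS, hfacconj, hfacconj, hfacconj]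
      simp only [Matrix.mul_assoc]
      rw [hmid, hmid]
    -- the entries of N
    have hN00 : N 0 0 = S 0 0 := by
      rw [hNS, hΔdef, Matrix.mul_diagonal, hΔidef, Matrix.diagonal_mul, v0, hd0]
      ring
    have hN30 : N i3 0 = (d 3)⁻¹ * S i3 0 := by
      rw [hNS, hΔdef, Matrix.mul_diagonal, hΔidef, Matrix.diagonal_mul, v0, hd0, hv3]
      ring
    -- conclusion
    have hS00 : S 0 0 = 0 := by
      rw [hS, key00 (θ 1) (θ (Fin.last D))]
      have e : (1 + θ 1) * (1 + θ (Fin.last D)) + B 1 2 = 0 := by linear_combination heq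
      rw [e, mul_zero]
    have hN00z : N 0 0 = 0 := by rw [hN00, hS00]
    have hx : star (Pi.single (0 : Fin (D+1)) (1:ℝ)) ⬝ᵥ N *ᵥ Pi.single (0 : Fin (D+1)) (1:ℝ)
        = N 0 0 := by
      simp [Matrix.mulVec_single, dotProduct, Pi.single_apply]
    have hNx : N *ᵥ Pi.single (0 : Fin (D+1)) (1:ℝ) = 0 :=
      (hNpsd.dotProduct_mulVec_zero_iff _).mp (by rw [hx, hN00z])
    have h30 : N i3 0 = 0 := by
      have h := congrFun hNx i3
      rw [Matrix.mulVec_single] at h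
      simpa using h
    have hS30 : S i3 0 = 0 := by
      have hd3 : (d 3)⁻¹ ≠ 0 := inv_ne_zero (ne_of_gt (dpos 3 hD3))
      rw [hN30] at h30
      exact (mul_eq_zero.mp h30).resolve_left hd3
    have hpos : 0 < S i3 0 := by
      rw [hS, key30 i3 hv3]
      have p1 : 0 < B i3 2 := hsub' i3 2 (by rw [hv3, v2])
      have p2 : 0 < B 2 1 := hsub' 2 1 (by rw [v2, v1])
      exact mul_pos p1 p2
    linarith
  · -- backward: D = 2 implies equality
    intro hD2
    subst hD2
    have hCH : (B - θ 0 • 1) * (B - θ 1 • 1) * (B - θ 2 • 1) = 0 := by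
      have h := Matrix.aeval_self_charpoly B
      rw [hchar, Fin.prod_univ_three] at h
      simpa [_root_.map_mul, map_sub, Algebra.algebraMap_eq_smul_one] using h
    have hlast : (Fin.last 2 : Fin 3) = 2 := rfl
    have h0 := key00 (θ 1) (θ 2)
    rw [← hθ0] at h0
    rw [hCH] at h0
    rw [hθ0] at h0
    have h00 : -κ * ((1 + θ 1) * (1 + θ 2) + B 1 2) = 0 := by
      rw [← h0]; simp
    have : (1 + θ 1) * (1 + θ 2) + B 1 2 = 0 := by
      rcases mul_eq_zero.mp h00 with h | h
      · exact absurd (neg_eq_zero.mp h) (ne_of_gt hκpos)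
      · exact h
    rw [hlast]
    linarith
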